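/- Deletion followed by addition is the identity on the region where it is defined: let φ_d be continuous with ⟨φ_d,φ_d⟩(x) < 1 for all x < x2, and set ψ = φ_d/(1−⟨φ_d,φ_d⟩). Then (1−⟨φ_d,φ_d⟩(x))(1+⟨ψ,ψ⟩(x)) = 1 for all x, and ψ/(1+⟨ψ,ψ⟩) = φ_d. -/

import Mathlib

open Set MeasureTheory intervalIntegral

theorem am_delete_then_add (x1 x2 : ℝ) (φd : ℝ → ℝ)
    (hcont : ContinuousOn φd (Ioo x1 x2))
    (hint : ∀ x ∈ Ioo x1 x2, IntegrableOn (fun y => φd y ^ 2) (Ioo x1 x))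
    (hlt1 : ∀ x ∈ Ioo x1 x2, (∫ t in x1..x, φd t ^ 2) < 1) :
    ∀ x ∈ Ioo x1 x2,
      (1 - ∫ t in x1..x, φd t ^ 2) *
        (1 + ∫ t in x1..x, (φd t / (1 - ∫ s in x1..t, φd s ^ 2)) ^ 2) = 1 ∧
      (φd x / (1 - ∫ t in x1..x, φd t ^ 2)) /
        (1 + ∫ t in x1..x, (φd t / (1 - ∫ s in x1..t, φd s ^ 2)) ^ 2) =
        φd x := by
  intro x hx
  obtain ⟨hx1, hx2⟩ := hx
  set F : ℝ → ℝ := fun t => ∫ s in x1..t, φd s ^ 2 with hF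
  -- F < 1 on Icc x1 x
  have hFlt : ∀ t ∈ Icc x1 x, F t < 1 := by
    intro t ht
    rcases eq_or_lt_of_le ht.1 with h | h
    · simp [hF, ← h]
    · exact hlt1 t ⟨h, lt_of_le_of_lt ht.2 hx2⟩
  have hFne : ∀ t ∈ Icc x1 x, (1 - F t) ≠ 0 := fun t ht => by
    have := hFlt t ht; linarith
  -- continuity of F on Icc x1 x
  have hFint : IntegrableOn (fun y => φd y ^ 2) (Icc x1 x) := by
    rw [integrableOn_Icc_iff_integrableOn_Ioo]
    exact hint x ⟨hx1, hx2⟩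
  have hFcont : ContinuousOn F (Icc x1 x) := by
    have := intervalIntegral.continuousOn_primitive_interval
      (f := fun y => φd y ^ 2) (a := x1) (b := x) (μ := volume)
      (by rwa [uIcc_of_le hx1.le])
    rwa [uIcc_of_le hx1.le] at this
  have hGcont : ContinuousOn (fun t => (1 - F t)⁻¹) (Icc x1 x) :=
    ((continuousOn_const.sub hFcont).inv₀ hFne)
  -- derivative on Ioo x1 x
  have hderiv : ∀ t ∈ Ioo x1 x, HasDerivAt (fun u => (1 - F u)⁻¹)
      ((φd t / (1 - F t)) ^ 2) t := by
    intro t ht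
    have htmem : t ∈ Ioo x1 x2 := ⟨ht.1, lt_trans ht.2 hx2⟩
    have hii : IntervalIntegrable (fun y => φd y ^ 2) volume x1 t := by
      rw [intervalIntegrable_iff_integrableOn_Ioo_of_le ht.1.le]
      exact hint t htmem
    have hca : ContinuousAt (fun y => φd y ^ 2) t :=
      ((hcont t htmem).continuousAt (Ioo_mem_nhds htmem.1 htmem.2)).pow 2
    have hsm : StronglyMeasurableAtFilter (fun y => φd y ^ 2) (nhds t) :=
      (hcont.pow 2).stronglyMeasurableAtFilter isOpen_Ioo t htmem
    have hFd : HasDerivAt F (φd t ^ 2) t :=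
      intervalIntegral.integral_hasDerivAt_right hii hsm hca
    have h1 : HasDerivAt (fun u => 1 - F u) (-(φd t ^ 2)) t := hFd.const_sub 1
    have hne : (1 : ℝ) - F t ≠ 0 := hFne t ⟨ht.1.le, ht.2.le⟩
    have := h1.inv hne
    have e : (φd t / (1 - F t)) ^ 2 = -(-(φd t ^ 2)) / (1 - F t) ^ 2 := by
      rw [neg_neg, div_pow]
    rw [e]
    exact this
  -- integrability of ψ^2
  have hψint : IntervalIntegrable (fun t => (φd t / (1 - F t)) ^ 2) volume x1 x := by
    rw [intervalIntegrable_iff_integrableOn_Ioo_of_le hx1.le]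
    have hgcont : ContinuousOn (fun t => ((1 - F t) ^ 2)⁻¹) (Icc x1 x) :=
      ((continuousOn_const.sub hFcont).pow 2).inv₀ (fun t ht => pow_ne_zero 2 (hFne t ht))
    obtain ⟨C, hC⟩ := (isCompact_Icc).exists_bound_of_continuousOn hgcont
    have hmeas : AEStronglyMeasurable (fun t => ((1 - F t) ^ 2)⁻¹)
        (volume.restrict (Ioo x1 x)) :=
      (hgcont.mono Ioo_subset_Icc_self).aestronglyMeasurable measurableSet_Ioo
    have hbd : ∀ᵐ t ∂(volume.restrict (Ioo x1 x)), ‖((1 - F t) ^ 2)⁻¹‖ ≤ C :=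
      (ae_restrict_iff' measurableSet_Ioo).2
        (ae_of_all _ fun t ht => hC t (Ioo_subset_Icc_self ht))
    have := (hint x ⟨hx1, hx2⟩).bdd_mul hmeas hbd
    refine this.congr (ae_of_all _ fun t => ?_)
    simp only [div_pow]
    rw [div_eq_mul_inv, mul_comm]
  -- FTC
  have hx1x : x1 ≤ x := hx1.le
  have key : (∫ t in x1..x, (φd t / (1 - F t)) ^ 2) = (1 - F x)⁻¹ - 1 := by
    have := intervalIntegral.integral_eq_sub_of_hasDeriv_right_of_le hx1x hGcont
      (fun t ht => (hderiv t ht).hasDerivWithinAt) hψint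
    rw [this]
    have : F x1 = 0 := by simp [hF]
    rw [this]
    norm_num
  have hFx : F x < 1 := hlt1 x ⟨hx1, hx2⟩
  have hne : (1 : ℝ) - F x ≠ 0 := by linarith
  have hFxdef : (∫ t in x1..x, φd t ^ 2) = F x := rfl
  have hψdef : (∫ t in x1..x, (φd t / (1 - ∫ s in x1..t, φd s ^ 2)) ^ 2)
      = (1 - F x)⁻¹ - 1 := key
  rw [hFxdef, hψdef]
  constructor
  · field_simp; ring
  · field_simp; ring
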